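/- Let (Ω, F, μ) be a probability space with a filtration (𝓕_t) indexed by a linearly ordered set, and let r ∈ (0,1). Let Y¹ and Y² be adapted processes with Y¹_t ≥ 0 and Y²_t ≥ 0 a.e. for every t, such that the processes ((Y¹_t)^r)_t and ((Y²_t)^r)_t are submartingales with respect to (𝓕_t) and μ. Then for every λ ∈ [0,1], the process ((λ·Y¹_t + (1−λ)·Y²_t)^r)_t is a submartingale with respect to (𝓕_t) and μ. -/

import Mathlib

open MeasureTheory

section AuxLemmas

/-- Weighted reverse-Hölder from concavity: for weights `t1 + t2 = 1`,
`t1^(1-r) * u^r + t2^(1-r) * v^r ≤ (u+v)^r`. -/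
private lemma helper_weights {r : ℝ} (hr0 : 0 < r) (hr1 : r < 1)
    {u v t1 t2 : ℝ} (hu : 0 ≤ u) (hv : 0 ≤ v) (ht1 : 0 ≤ t1) (ht2 : 0 ≤ t2)
    (hsum : t1 + t2 = 1) :
    t1 ^ (1 - r) * u ^ r + t2 ^ (1 - r) * v ^ r ≤ (u + v) ^ r := by
  rcases eq_or_lt_of_le ht1 with h1 | h1
  · have ht2' : t2 = 1 := by linarith
    rw [← h1, ht2', Real.zero_rpow (by linarith), Real.one_rpow]
    have : v ^ r ≤ (u + v) ^ r := Real.rpow_le_rpow hv (by linarith) hr0.le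
    linarith
  rcases eq_or_lt_of_le ht2 with h2 | h2
  · have ht1' : t1 = 1 := by linarith
    rw [← h2, ht1', Real.zero_rpow (by linarith), Real.one_rpow]
    have : u ^ r ≤ (u + v) ^ r := Real.rpow_le_rpow hu (by linarith) hr0.le
    linarith
  have key := (Real.concaveOn_rpow hr0.le hr1.le).2
    (Set.mem_Ici.2 (div_nonneg hu ht1)) (Set.mem_Ici.2 (div_nonneg hv ht2)) ht1 ht2 hsum
  simp only [smul_eq_mul] at key
  have e1 : t1 * (u / t1) + t2 * (v / t2) = u + v := by
    field_simp
  rw [e1] at key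
  have e2 : t1 * (u / t1) ^ r = t1 ^ (1 - r) * u ^ r := by
    rw [Real.div_rpow hu ht1, Real.rpow_sub h1, Real.rpow_one]
    field_simp
  have e3 : t2 * (v / t2) ^ r = t2 ^ (1 - r) * v ^ r := by
    rw [Real.div_rpow hv ht2, Real.rpow_sub h2, Real.rpow_one]
    field_simp
  rw [e2, e3] at key
  exact key

private lemma term_eq {r : ℝ} {c b a S : ℝ} (hc : 0 ≤ c) (hb : 0 ≤ b) (ha : 0 ≤ a)
    (hS : 0 < S) :
    (c * b / S) ^ (1 - r) * (c * a) ^ r = c * b ^ (1 - r) * S ^ (r - 1) * a ^ r := by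
  rw [Real.div_rpow (mul_nonneg hc hb) hS.le, Real.mul_rpow hc hb, Real.mul_rpow hc ha,
    show r - 1 = -(1 - r) by ring, Real.rpow_neg hS.le]
  have hcc : c ^ (1 - r) * c ^ r = c := by
    rw [← Real.rpow_add' hc (by rw [sub_add_cancel]; exact one_ne_zero), sub_add_cancel,
      Real.rpow_one]
  rw [div_eq_mul_inv]
  linear_combination (b ^ (1 - r) * (S ^ (1 - r))⁻¹ * a ^ r) * hcc

/-- The key pointwise inequality. -/
private lemma key_ineq {r : ℝ} (hr0 : 0 < r) (hr1 : r < 1) {l a1 a2 b1 b2 : ℝ}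
    (hl0 : 0 ≤ l) (hl1 : l ≤ 1) (ha1 : 0 ≤ a1) (ha2 : 0 ≤ a2) (hb1 : 0 ≤ b1) (hb2 : 0 ≤ b2) :
    l * b1 ^ (1 - r) * (l * b1 + (1 - l) * b2) ^ (r - 1) * a1 ^ r
      + (1 - l) * b2 ^ (1 - r) * (l * b1 + (1 - l) * b2) ^ (r - 1) * a2 ^ r
      ≤ (l * a1 + (1 - l) * a2) ^ r := by
  have hl2 : (0 : ℝ) ≤ 1 - l := by linarith
  set S := l * b1 + (1 - l) * b2 with hSdef
  have hS : 0 ≤ S := add_nonneg (mul_nonneg hl0 hb1) (mul_nonneg hl2 hb2)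
  rcases eq_or_lt_of_le hS with h | h
  · rw [← h, Real.zero_rpow (by linarith)]
    have : (0:ℝ) ≤ (l * a1 + (1 - l) * a2) ^ r :=
      Real.rpow_nonneg (add_nonneg (mul_nonneg hl0 ha1) (mul_nonneg hl2 ha2)) r
    nlinarith [this]
  · have hsum : l * b1 / S + (1 - l) * b2 / S = 1 := by
      field_simp
      exact hSdef.symm
    have h1 := helper_weights hr0 hr1 (mul_nonneg hl0 ha1) (mul_nonneg hl2 ha2)
      (div_nonneg (mul_nonneg hl0 hb1) hS) (div_nonneg (mul_nonneg hl2 hb2) hS) hsum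
    rwa [term_eq hl0 hb1 ha1 h, term_eq hl2 hb2 ha2 h] at h1

/-- Evaluating the coefficients at the time-`s` values gives back `S^r`. -/
private lemma key_eq {r : ℝ} (hr0 : 0 < r) (hr1 : r < 1) {l b1 b2 : ℝ}
    (hl0 : 0 ≤ l) (hl1 : l ≤ 1) (hb1 : 0 ≤ b1) (hb2 : 0 ≤ b2) :
    l * b1 ^ (1 - r) * (l * b1 + (1 - l) * b2) ^ (r - 1) * b1 ^ r
      + (1 - l) * b2 ^ (1 - r) * (l * b1 + (1 - l) * b2) ^ (r - 1) * b2 ^ r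
      = (l * b1 + (1 - l) * b2) ^ r := by
  set S := l * b1 + (1 - l) * b2 with hSdef
  have e1 : b1 ^ (1 - r) * b1 ^ r = b1 := by
    rw [← Real.rpow_add' hb1 (by rw [sub_add_cancel]; exact one_ne_zero), sub_add_cancel,
      Real.rpow_one]
  have e2 : b2 ^ (1 - r) * b2 ^ r = b2 := by
    rw [← Real.rpow_add' hb2 (by rw [sub_add_cancel]; exact one_ne_zero), sub_add_cancel,
      Real.rpow_one]
  have hS0 : 0 ≤ S := add_nonneg (mul_nonneg hl0 hb1) (mul_nonneg (by linarith) hb2)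
  have e3 : S ^ (r - 1) * S = S ^ r := by
    calc S ^ (r - 1) * S = S ^ (r - 1) * S ^ (1:ℝ) := by rw [Real.rpow_one]
      _ = S ^ (r - 1 + 1) := (Real.rpow_add' hS0 (by simpa using hr0.ne')).symm
      _ = S ^ r := by norm_num
  calc l * b1 ^ (1 - r) * S ^ (r - 1) * b1 ^ r + (1 - l) * b2 ^ (1 - r) * S ^ (r - 1) * b2 ^ r
      = S ^ (r - 1) * (l * (b1 ^ (1 - r) * b1 ^ r) + (1 - l) * (b2 ^ (1 - r) * b2 ^ r)) := by ring
    _ = S ^ (r - 1) * S := by rw [e1, e2]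
    _ = S ^ r := e3

/-- The coefficients are bounded by `1`. -/
private lemma coef_le_one {r : ℝ} (hr0 : 0 < r) (hr1 : r < 1) {c b S : ℝ}
    (hc : 0 ≤ c) (hc1 : c ≤ 1) (hb : 0 ≤ b) (hcb : c * b ≤ S) :
    c * b ^ (1 - r) * S ^ (r - 1) ≤ 1 := by
  rcases eq_or_lt_of_le hc with h | hcpos
  · simp [← h]
  rcases eq_or_lt_of_le hb with h | hbpos
  · rw [← h, Real.zero_rpow (by linarith)]
    simp
  have hcb0 : 0 < c * b := mul_pos hcpos hbpos
  have hmono : S ^ (r - 1) ≤ (c * b) ^ (r - 1) :=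
    Real.rpow_le_rpow_of_nonpos hcb0 hcb (by linarith)
  have hval : c * b ^ (1 - r) * (c * b) ^ (r - 1) = c ^ r := by
    rw [Real.mul_rpow hc hb]
    have hbb : b ^ (1 - r) * b ^ (r - 1) = 1 := by
      rw [← Real.rpow_add hbpos]; norm_num
    have hcc : c * c ^ (r - 1) = c ^ r := by
      conv_rhs => rw [show r = 1 + (r - 1) by ring]
      rw [Real.rpow_add hcpos, Real.rpow_one]
    calc c * b ^ (1 - r) * (c ^ (r - 1) * b ^ (r - 1))
        = (c * c ^ (r - 1)) * (b ^ (1 - r) * b ^ (r - 1)) := by ring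
      _ = c ^ r * 1 := by rw [hbb, hcc]
      _ = c ^ r := by rw [mul_one]
  have h2 : c * b ^ (1 - r) * S ^ (r - 1) ≤ c ^ r := by
    rw [← hval]
    exact mul_le_mul_of_nonneg_left hmono
      (mul_nonneg hc (Real.rpow_nonneg hb _))
  exact h2.trans (Real.rpow_le_one hc hc1 hr0.le)

private lemma coef_nonneg {r : ℝ} {c b S : ℝ} (hc : 0 ≤ c) (hb : 0 ≤ b) (hS : 0 ≤ S) :
    0 ≤ c * b ^ (1 - r) * S ^ (r - 1) :=
  mul_nonneg (mul_nonneg hc (Real.rpow_nonneg hb _)) (Real.rpow_nonneg hS _)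

private lemma add_rpow_le {r a b : ℝ} (hr0 : 0 < r) (hr1 : r < 1) (ha : 0 ≤ a) (hb : 0 ≤ b) :
    (a + b) ^ r ≤ a ^ r + b ^ r := by
  have := NNReal.rpow_add_le_add_rpow (⟨a, ha⟩ : NNReal) (⟨b, hb⟩ : NNReal) hr0.le hr1.le
  exact_mod_cast this

end AuxLemmas

/-- If `Y¹, Y²` are nonnegative adapted processes such that `(Y¹)^r` and `(Y²)^r`
are submartingales (`r ∈ (0,1)`), then `(λ Y¹ + (1-λ) Y²)^r` is a submartingale. -/
theorem convex_combination_admissible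
    {Ω ι : Type*} [LinearOrder ι] {m0 : MeasurableSpace Ω}
    (μ : Measure Ω) [IsProbabilityMeasure μ] (ℱ : Filtration ι m0)
    (r : ℝ) (hr0 : 0 < r) (hr1 : r < 1)
    (Y1 Y2 : ι → Ω → ℝ)
    (hY1adp : Adapted ℱ Y1) (hY2adp : Adapted ℱ Y2)
    (hY1pos : ∀ t, ∀ᵐ ω ∂μ, 0 ≤ Y1 t ω) (hY2pos : ∀ t, ∀ᵐ ω ∂μ, 0 ≤ Y2 t ω)
    (h1 : Submartingale (fun t ω => Y1 t ω ^ r) ℱ μ)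
    (h2 : Submartingale (fun t ω => Y2 t ω ^ r) ℱ μ)
    (l : ℝ) (hl0 : 0 ≤ l) (hl1 : l ≤ 1) :
    Submartingale (fun t ω => (l * Y1 t ω + (1 - l) * Y2 t ω) ^ r) ℱ μ := by
  have hl2 : (0 : ℝ) ≤ 1 - l := by linarith
  -- measurability of the combination at each time
  have hYm : ∀ t, Measurable[ℱ t] fun ω => l * Y1 t ω + (1 - l) * Y2 t ω := fun t =>
    ((hY1adp t).const_mul l).add ((hY2adp t).const_mul (1 - l))
  have hadp : ∀ t, StronglyMeasurable[ℱ t]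
      fun ω => (l * Y1 t ω + (1 - l) * Y2 t ω) ^ r := fun t =>
    ((hYm t).pow measurable_const).stronglyMeasurable
  -- integrability at each time
  have hint : ∀ t, Integrable (fun ω => (l * Y1 t ω + (1 - l) * Y2 t ω) ^ r) μ := by
    intro t
    refine ((h1.integrable t).add (h2.integrable t)).mono
      ((hadp t).mono (ℱ.le t)).aestronglyMeasurable ?_
    filter_upwards [hY1pos t, hY2pos t] with ω h1ω h2ω
    have ha : 0 ≤ l * Y1 t ω + (1 - l) * Y2 t ω :=
      add_nonneg (mul_nonneg hl0 h1ω) (mul_nonneg hl2 h2ω)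
    simp only [Pi.add_apply]
    rw [Real.norm_eq_abs, abs_of_nonneg (Real.rpow_nonneg ha r), Real.norm_eq_abs,
      abs_of_nonneg (add_nonneg (Real.rpow_nonneg h1ω r) (Real.rpow_nonneg h2ω r))]
    calc (l * Y1 t ω + (1 - l) * Y2 t ω) ^ r
        ≤ (Y1 t ω + Y2 t ω) ^ r := by
          apply Real.rpow_le_rpow ha (by nlinarith) hr0.le
      _ ≤ Y1 t ω ^ r + Y2 t ω ^ r := add_rpow_le hr0 hr1 h1ω h2ω
  refine ⟨hadp, fun s t hst => ?_, hint⟩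
  -- the coefficients
  set α1 : Ω → ℝ := fun ω =>
    l * Y1 s ω ^ (1 - r) * (l * Y1 s ω + (1 - l) * Y2 s ω) ^ (r - 1) with hα1def
  set α2 : Ω → ℝ := fun ω =>
    (1 - l) * Y2 s ω ^ (1 - r) * (l * Y1 s ω + (1 - l) * Y2 s ω) ^ (r - 1) with hα2def
  have hα1m : StronglyMeasurable[ℱ s] α1 :=
    ((((hY1adp s).pow measurable_const).const_mul l).mul
      ((hYm s).pow measurable_const)).stronglyMeasurable
  have hα2m : StronglyMeasurable[ℱ s] α2 :=
    ((((hY2adp s).pow measurable_const).const_mul (1 - l)).mul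
      ((hYm s).pow measurable_const)).stronglyMeasurable
  -- almost-everywhere properties of the coefficients
  have hα1nn : ∀ᵐ ω ∂μ, 0 ≤ α1 ω := by
    filter_upwards [hY1pos s, hY2pos s] with ω h1ω h2ω
    exact coef_nonneg hl0 h1ω (add_nonneg (mul_nonneg hl0 h1ω) (mul_nonneg hl2 h2ω))
  have hα2nn : ∀ᵐ ω ∂μ, 0 ≤ α2 ω := by
    filter_upwards [hY1pos s, hY2pos s] with ω h1ω h2ω
    exact coef_nonneg hl2 h2ω (add_nonneg (mul_nonneg hl0 h1ω) (mul_nonneg hl2 h2ω))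
  have hα1b : ∀ᵐ ω ∂μ, ‖α1 ω‖ ≤ 1 := by
    filter_upwards [hY1pos s, hY2pos s] with ω h1ω h2ω
    rw [Real.norm_eq_abs, abs_of_nonneg (coef_nonneg hl0 h1ω
      (add_nonneg (mul_nonneg hl0 h1ω) (mul_nonneg hl2 h2ω)))]
    exact coef_le_one hr0 hr1 hl0 hl1 h1ω (by nlinarith)
  have hα2b : ∀ᵐ ω ∂μ, ‖α2 ω‖ ≤ 1 := by
    filter_upwards [hY1pos s, hY2pos s] with ω h1ω h2ω
    rw [Real.norm_eq_abs, abs_of_nonneg (coef_nonneg hl2 h2ω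
      (add_nonneg (mul_nonneg hl0 h1ω) (mul_nonneg hl2 h2ω)))]
    exact coef_le_one hr0 hr1 hl2 (by linarith) h2ω (by nlinarith)
  -- integrability of the products
  have hα1Z : Integrable (fun ω => α1 ω * Y1 t ω ^ r) μ :=
    (h1.integrable t).bdd_mul ((hα1m.mono (ℱ.le s)).aestronglyMeasurable) hα1b
  have hα2Z : Integrable (fun ω => α2 ω * Y2 t ω ^ r) μ :=
    (h2.integrable t).bdd_mul ((hα2m.mono (ℱ.le s)).aestronglyMeasurable) hα2b
  -- pull-out property
  have hpull1 : μ[(fun ω => α1 ω * Y1 t ω ^ r)|ℱ s]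
      =ᵐ[μ] α1 * μ[(fun ω => Y1 t ω ^ r)|ℱ s] :=
    condExp_mul_of_stronglyMeasurable_left hα1m hα1Z (h1.integrable t)
  have hpull2 : μ[(fun ω => α2 ω * Y2 t ω ^ r)|ℱ s]
      =ᵐ[μ] α2 * μ[(fun ω => Y2 t ω ^ r)|ℱ s] :=
    condExp_mul_of_stronglyMeasurable_left hα2m hα2Z (h2.integrable t)
  -- conditional expectation additivity
  have hadd : μ[(fun ω => α1 ω * Y1 t ω ^ r) + (fun ω => α2 ω * Y2 t ω ^ r)|ℱ s]
      =ᵐ[μ] μ[(fun ω => α1 ω * Y1 t ω ^ r)|ℱ s] + μ[(fun ω => α2 ω * Y2 t ω ^ r)|ℱ s] :=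
    condExp_add hα1Z hα2Z _
  -- monotonicity: the combination dominates
  have hdom : (fun ω => α1 ω * Y1 t ω ^ r) + (fun ω => α2 ω * Y2 t ω ^ r)
      ≤ᵐ[μ] fun ω => (l * Y1 t ω + (1 - l) * Y2 t ω) ^ r := by
    filter_upwards [hY1pos s, hY2pos s, hY1pos t, hY2pos t] with ω hb1 hb2 ha1 ha2
    simpa [hα1def, hα2def, mul_assoc, mul_comm, mul_left_comm] using
      key_ineq hr0 hr1 hl0 hl1 ha1 ha2 hb1 hb2
  have hmono := condExp_mono (m := ℱ s) (hα1Z.add hα2Z) (hint t) hdom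
  -- submartingale property of the pieces
  have h1c := h1.2.1 s t hst
  have h2c := h2.2.1 s t hst
  -- put everything together
  filter_upwards [hY1pos s, hY2pos s, h1c, h2c, hα1nn, hα2nn, hmono,
    hadd, hpull1, hpull2] with ω hb1 hb2 h1cω h2cω hα1ω hα2ω hmonoω haddω hp1ω hp2ω
  have step1 : (l * Y1 s ω + (1 - l) * Y2 s ω) ^ r
      = α1 ω * Y1 s ω ^ r + α2 ω * Y2 s ω ^ r := by
    rw [hα1def, hα2def]
    simpa [mul_assoc, mul_comm, mul_left_comm] using (key_eq hr0 hr1 hl0 hl1 hb1 hb2).symm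
  have step2 : α1 ω * Y1 s ω ^ r + α2 ω * Y2 s ω ^ r
      ≤ α1 ω * (μ[(fun ω => Y1 t ω ^ r)|ℱ s]) ω + α2 ω * (μ[(fun ω => Y2 t ω ^ r)|ℱ s]) ω :=
    add_le_add (mul_le_mul_of_nonneg_left h1cω hα1ω) (mul_le_mul_of_nonneg_left h2cω hα2ω)
  have step3 : α1 ω * (μ[(fun ω => Y1 t ω ^ r)|ℱ s]) ω + α2 ω * (μ[(fun ω => Y2 t ω ^ r)|ℱ s]) ω
      = (μ[(fun ω => α1 ω * Y1 t ω ^ r) + (fun ω => α2 ω * Y2 t ω ^ r)|ℱ s]) ω := by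
    rw [haddω, Pi.add_apply, hp1ω, hp2ω, Pi.mul_apply, Pi.mul_apply]
  calc (l * Y1 s ω + (1 - l) * Y2 s ω) ^ r
      = α1 ω * Y1 s ω ^ r + α2 ω * Y2 s ω ^ r := step1
    _ ≤ _ := step2
    _ = _ := step3
    _ ≤ (μ[(fun ω => (l * Y1 t ω + (1 - l) * Y2 t ω) ^ r)|ℱ s]) ω := hmonoω
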